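/- Let E be a Leja sequence for the unit disk and let 2^j ≤ k < 2^j + 2^{j−1} (j ≥ 1). Then Re(e_k) ∉ {Re(e_s) : 0 ≤ s ≤ k−1}; equivalently, e_k is not the conjugate of any earlier point e_s, s < k. -/

import Mathlib

open Finset

/-- A Leja sequence for the unit disk `D = {|z| ≤ 1}`: it starts at `1`, stays in `D`,
and each point maximizes the product of distances to the previous points over `D`. -/
def IsLejaSeq (e : ℕ → ℂ) : Prop :=
  e 0 = 1 ∧ (∀ k, ‖e k‖ ≤ 1) ∧
    ∀ j, 1 ≤ j → ∀ z : ℂ, ‖z‖ ≤ 1 →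
      ∏ m ∈ Finset.range j, ‖z - e m‖ ≤
        ∏ m ∈ Finset.range j, ‖e j - e m‖

lemma sum_range_two_pow (n : ℕ) : ∑ i ∈ range n, 2^i = 2^n - 1 := by
  induction n with
  | zero => simp
  | succ n ih =>
    rw [sum_range_succ, ih]
    have h1 : 1 ≤ 2^n := Nat.one_le_two_pow
    have h2 : 2^(n+1) = 2^n + 2^n := by ring
    omega

lemma merge_id (z a : ℂ) (v : ℕ) :
    (z - a) * ∏ i ∈ range v, (z^(2^i) + a^(2^i)) = z^(2^v) - a^(2^v) := by
  induction v with
  | zero => simp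
  | succ v ih =>
    rw [prod_range_succ, ← mul_assoc, ih, pow_succ, pow_mul, pow_mul]
    ring

lemma even_two_pow {n : ℕ} (hn : n ≠ 0) : Even (2^n) := by
  obtain ⟨m, rfl⟩ := Nat.exists_eq_succ_of_ne_zero hn
  exact ⟨2^m, by rw [pow_succ]; ring⟩

lemma eq_of_abs_add_eq_two {x u : ℂ} (hx : ‖x‖ ≤ 1) (hu : ‖u‖ = 1)
    (h : ‖x + u‖ = 2) : x = u := by
  have h1 : Complex.normSq (x + u) = 4 := by
    have := Complex.sq_norm (x + u); rw [h] at this; nlinarith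
  have h2 : Complex.normSq x ≤ 1 := by
    have := Complex.sq_norm x
    nlinarith [norm_nonneg x]
  have h3 : Complex.normSq u = 1 := by
    have := Complex.sq_norm u; rw [hu] at this; nlinarith
  have key : Complex.normSq (x - u) = 2*Complex.normSq x + 2*Complex.normSq u - Complex.normSq (x+u) := by
    simp [Complex.normSq_apply]; ring
  have h5 : Complex.normSq (x - u) ≤ 0 := by rw [key]; linarith
  have h6 : Complex.normSq (x - u) = 0 := le_antisymm h5 (Complex.normSq_nonneg _)
  have := Complex.normSq_eq_zero.mp h6
  exact sub_eq_zero.mp this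

lemma prod_le_two_pow {ι : Type*} (s : Finset ι) (f : ι → ℝ) (h0 : ∀ i ∈ s, 0 ≤ f i)
    (h2 : ∀ i ∈ s, f i ≤ 2) : ∏ i ∈ s, f i ≤ 2^s.card := by
  classical
  induction s using Finset.induction with
  | empty => simp
  | @insert j s hj ih =>
    rw [prod_insert hj, card_insert_of_notMem hj, pow_succ, mul_comm ((2:ℝ)^s.card) 2]
    have hp0 : 0 ≤ ∏ i ∈ s, f i := prod_nonneg (fun i hi => h0 i (mem_insert_of_mem hi))
    have := ih (fun i hi => h0 i (mem_insert_of_mem hi)) (fun i hi => h2 i (mem_insert_of_mem hi))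
    exact mul_le_mul (h2 j (mem_insert_self j s)) this hp0 (by norm_num)

lemma prod_forcing {ι : Type*} (s : Finset ι) (f : ι → ℝ) (h0 : ∀ i ∈ s, 0 ≤ f i)
    (h2 : ∀ i ∈ s, f i ≤ 2) (hp : (2:ℝ)^s.card ≤ ∏ i ∈ s, f i) : ∀ i ∈ s, f i = 2 := by
  classical
  induction s using Finset.induction with
  | empty => simp
  | @insert j s hj ih =>
    rw [prod_insert hj, card_insert_of_notMem hj] at hp
    have hps : ∏ i ∈ s, f i ≤ 2^s.card :=
      prod_le_two_pow s f (fun i hi => h0 i (mem_insert_of_mem hi)) (fun i hi => h2 i (mem_insert_of_mem hi))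
    have hp0 : 0 ≤ ∏ i ∈ s, f i := prod_nonneg (fun i hi => h0 i (mem_insert_of_mem hi))
    have hc : (0:ℝ) < 2^s.card := by positivity
    have hfj2 : f j ≤ 2 := h2 j (mem_insert_self j s)
    have hfj0 : 0 ≤ f j := h0 j (mem_insert_self j s)
    have hkey : f j * ∏ i ∈ s, f i ≤ f j * 2^s.card := mul_le_mul_of_nonneg_left hps hfj0
    have hpow : (2:ℝ)^(s.card+1) = 2 * 2^s.card := by ring
    have hfj : f j = 2 := by nlinarith
    have hrest : (2:ℝ)^s.card ≤ ∏ i ∈ s, f i := by nlinarith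
    intro i hi
    rcases mem_insert.mp hi with rfl | hi
    · exact hfj
    · exact ih (fun i hi => h0 i (mem_insert_of_mem hi)) (fun i hi => h2 i (mem_insert_of_mem hi)) hrest i hi


theorem leja_step (e : ℕ → ℂ) (he : IsLejaSeq e) (t : ℕ) (B : Finset ℕ)
    (hB : ∑ i ∈ B, 2^i = t) (ha : ‖e t‖ = 1)
    (hid : ∀ z : ℂ, ∏ m ∈ range t, ‖z - e m‖
        = ∏ i ∈ B, ‖z^(2^i) + (e t)^(2^i)‖) :
    ∃ v, v ∉ B ∧ range v ⊆ B ∧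
      (e (t+1))^(2^v) = -((e t)^(2^v)) ∧
      (∀ i ∈ B, v < i → (e (t+1))^(2^i) = (e t)^(2^i)) ∧
      (∑ i ∈ insert v (B \ range v), 2^i = t+1) ∧ ‖e (t+1)‖ = 1 ∧
      ∀ z : ℂ, ∏ m ∈ range (t+1), ‖z - e m‖ =
        ∏ i ∈ insert v (B \ range v), ‖z^(2^i) + (e (t+1))^(2^i)‖ := by
  classical
  set a := e t with haa
  set b := e (t+1) with hbb
  have hex : ∃ n, n ∉ B := Infinite.exists_notMem_finset B
  set v := Nat.find hex with hv
  have hvB : v ∉ B := Nat.find_spec hex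
  have hsub : range v ⊆ B := by
    intro m hm
    exact not_not.mp (Nat.find_min hex (mem_range.mp hm))
  have hvnot : v ∉ B \ range v := fun h => hvB (mem_sdiff.mp h).1
  have habs_pow : ∀ n : ℕ, ‖a ^ n‖ = 1 := by
    intro n; rw [norm_pow, ha, one_pow]
  -- full product formula
  have hfull : ∀ x : ℂ, ∏ m ∈ range (t+1), ‖x - e m‖
      = ‖x^(2^v) - a^(2^v)‖ * ∏ i ∈ B \ range v, ‖x^(2^i) + a^(2^i)‖ := by
    intro x
    rw [prod_range_succ, hid x, ← Finset.prod_sdiff hsub]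
    have hmerge : (∏ i ∈ range v, ‖x^(2^i)+a^(2^i)‖) * ‖x - a‖
        = ‖x^(2^v) - a^(2^v)‖ := by
      rw [← norm_prod, ← norm_mul, mul_comm, merge_id]
    rw [mul_assoc, hmerge, mul_comm]
  -- the witness point w
  set ξ : ℂ := Complex.exp ((Real.pi / 2^v : ℝ) * Complex.I) with hξ
  have hξabs : ‖ξ‖ = 1 := Complex.norm_exp_ofReal_mul_I _
  have hξpow : ξ^(2^v) = -1 := by
    rw [hξ, ← Complex.exp_nat_mul]
    have harg : ((2^v : ℕ) : ℂ) * (((Real.pi / 2^v : ℝ) : ℂ) * Complex.I)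
        = (Real.pi : ℂ) * Complex.I := by
      have h2 : ((2:ℂ))^v ≠ 0 := pow_ne_zero v two_ne_zero
      push_cast
      field_simp
    rw [harg, Complex.exp_pi_mul_I]
  set w : ℂ := a * ξ with hw
  have hwpow : w^(2^v) = -(a^(2^v)) := by rw [hw, mul_pow, hξpow, mul_neg_one]
  have hwabs : ‖w‖ ≤ 1 := by rw [hw, norm_mul, ha, hξabs]; norm_num
  -- w's powers at higher exponents
  have hwhigh : ∀ i ∈ B \ range v, w^(2^i) = a^(2^i) := by
    intro i hi
    obtain ⟨hiB, hir⟩ := mem_sdiff.mp hi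
    have hvi : v < i := lt_of_le_of_ne (le_of_not_gt (fun h => hir (mem_range.mpr h)))
      (fun h => hvB (h ▸ hiB))
    have hexp : 2^v * 2^(i-v) = 2^i := by
      rw [← pow_add, Nat.add_sub_cancel' (le_of_lt hvi)]
    have heven : Even (2^(i-v)) := even_two_pow (Nat.sub_ne_zero_of_lt hvi)
    calc w^(2^i) = (w^(2^v))^(2^(i-v)) := by rw [← pow_mul, hexp]
    _ = (a^(2^v))^(2^(i-v)) := by rw [hwpow, heven.neg_pow]
    _ = a^(2^i) := by rw [← pow_mul, hexp]
  -- value at w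
  have hwval : ∏ m ∈ range (t+1), ‖w - e m‖ = 2^((B \ range v).card + 1) := by
    rw [hfull w, hwpow]
    have h1 : ‖-(a^(2^v)) - a^(2^v)‖ = 2 := by
      have : -(a^(2^v)) - a^(2^v) = -(2 * a^(2^v)) := by ring
      rw [this, norm_neg, norm_mul, habs_pow]
      simp
    rw [h1]
    have h2 : ∏ i ∈ B \ range v, ‖w^(2^i) + a^(2^i)‖ = 2^((B \ range v).card) := by
      have hcongr : ∀ i ∈ B \ range v, ‖w^(2^i) + a^(2^i)‖ = 2 := by
        intro i hi
        rw [hwhigh i hi, ← two_mul, norm_mul, habs_pow]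
        simp
      rw [Finset.prod_congr rfl hcongr, Finset.prod_const]
    rw [h2]
    ring
  -- Leja maximality
  have hle : ∏ m ∈ range (t+1), ‖w - e m‖
      ≤ ∏ m ∈ range (t+1), ‖b - e m‖ :=
    he.2.2 (t+1) (Nat.succ_le_succ (Nat.zero_le t)) w hwabs
  -- forcing
  set G : ℕ → ℝ := fun i => if i = v then ‖b^(2^v) - a^(2^v)‖
    else ‖b^(2^i) + a^(2^i)‖ with hG
  have hb1 : ‖b‖ ≤ 1 := he.2.1 (t+1)
  have hbpow : ∀ n : ℕ, ‖b ^ n‖ ≤ 1 := by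
    intro n
    rw [norm_pow]
    exact pow_le_one₀ (norm_nonneg b) hb1
  have hGle : ∀ i ∈ insert v (B \ range v), G i ≤ 2 := by
    intro i _
    rcases eq_or_ne i v with rfl | h
    · simp only [hG, if_pos]
      calc ‖b^(2^v) - a^(2^v)‖ ≤ ‖b^(2^v)‖ + ‖a^(2^v)‖ := by
            rw [sub_eq_add_neg]
            refine (norm_add_le _ _).trans_eq ?_
            rw [norm_neg]
      _ ≤ 2 := by rw [habs_pow]; linarith [hbpow (2^v)]
    · simp only [hG, if_neg h]
      calc ‖b^(2^i) + a^(2^i)‖ ≤ ‖b^(2^i)‖ + ‖a^(2^i)‖ :=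
            norm_add_le _ _
      _ ≤ 2 := by rw [habs_pow]; linarith [hbpow (2^i)]
  have hG0 : ∀ i ∈ insert v (B \ range v), 0 ≤ G i := by
    intro i _
    rcases eq_or_ne i v with rfl | h
    · simp only [hG, if_pos]
      exact norm_nonneg _
    · simp only [hG, if_neg h]
      exact norm_nonneg _
  have hGprod : ∏ i ∈ insert v (B \ range v), G i = ∏ m ∈ range (t+1), ‖b - e m‖ := by
    rw [prod_insert hvnot, hfull b]
    congr 1
    · simp only [hG, if_pos rfl]
    · exact Finset.prod_congr rfl (fun i hi => by
        have hne : i ≠ v := fun h => hvnot (h ▸ hi)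
        simp only [hG, if_neg hne])
  have hcard : (insert v (B \ range v)).card = (B \ range v).card + 1 :=
    card_insert_of_notMem hvnot
  have hforce : ∀ i ∈ insert v (B \ range v), G i = 2 := by
    apply prod_forcing _ _ hG0 hGle
    rw [hGprod, hcard]
    calc (2:ℝ)^((B \ range v).card + 1) = ∏ m ∈ range (t+1), ‖w - e m‖ := hwval.symm
    _ ≤ _ := hle
  -- extract equalities
  have hbv : b^(2^v) = -(a^(2^v)) := by
    have := hforce v (mem_insert_self _ _)
    simp only [hG, if_pos rfl] at this
    have habs' : ‖-(a^(2^v))‖ = 1 := by rw [norm_neg, habs_pow]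
    have := eq_of_abs_add_eq_two (hbpow (2^v)) habs' (by rw [← sub_eq_add_neg]; exact this)
    exact this
  have hbi : ∀ i ∈ B \ range v, b^(2^i) = a^(2^i) := by
    intro i hi
    have hne : i ≠ v := fun h => hvnot (h ▸ hi)
    have := hforce i (mem_insert_of_mem hi)
    simp only [hG, if_neg hne] at this
    exact eq_of_abs_add_eq_two (hbpow (2^i)) (habs_pow (2^i)) this
  have hbabs : ‖b‖ = 1 := by
    have h1 : ‖b‖ ^ (2^v) = 1 := by
      rw [← norm_pow, hbv, norm_neg, habs_pow]
    refine le_antisymm hb1 ?_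
    by_contra h
    push_neg at h
    have h2 : ‖b‖ ^ (2^v) < 1 :=
      pow_lt_one₀ (norm_nonneg b) h (by positivity : (0:ℕ) < 2^v).ne'
    rw [h1] at h2
    exact lt_irrefl 1 h2
  -- conclusions
  refine ⟨v, hvB, hsub, hbv, ?_, ?_, hbabs, ?_⟩
  · intro i hiB hvi
    exact hbi i (mem_sdiff.mpr ⟨hiB, fun hr => absurd (mem_range.mp hr) (not_lt.mpr hvi.le)⟩)
  · rw [Finset.sum_insert hvnot]
    have h1 : (∑ i ∈ B \ range v, 2^i) + ∑ i ∈ range v, 2^i = ∑ i ∈ B, 2^i :=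
      Finset.sum_sdiff hsub
    have h2 : ∑ i ∈ range v, 2^i = 2^v - 1 := sum_range_two_pow v
    have h3 : 1 ≤ 2^v := Nat.one_le_two_pow
    omega
  · intro z
    rw [hfull z, Finset.prod_insert hvnot]
    congr 1
    · rw [hbv]
      ring_nf
    · refine Finset.prod_congr rfl (fun i hi => ?_)
      rw [hbi i hi]

theorem main_inv (e : ℕ → ℂ) (he : IsLejaSeq e) : ∀ t, ∃ B : Finset ℕ,
    (∑ i ∈ B, 2^i = t) ∧ ‖e t‖ = 1 ∧
    ∀ z : ℂ, ∏ m ∈ range t, ‖z - e m‖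
      = ∏ i ∈ B, ‖z^(2^i) + (e t)^(2^i)‖ := by
  intro t
  induction t with
  | zero =>
    refine ⟨∅, by simp, by rw [he.1]; simp, by simp⟩
  | succ t ih =>
    obtain ⟨B, hB, ha, hid⟩ := ih
    obtain ⟨v, _, _, _, _, hsum, habs, hid'⟩ := leja_step e he t B hB ha hid
    exact ⟨insert v (B \ range v), hsum, habs, hid'⟩

lemma binary_single {B : Finset ℕ} {h : ℕ} (hs : ∑ i ∈ B, 2^i = 2^h) : B = {h} := by
  have hle : ∀ i ∈ B, i ≤ h := by
    intro i hi
    by_contra hih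
    push_neg at hih
    have h1 : 2^i ≤ ∑ i ∈ B, 2^i := Finset.single_le_sum (fun _ _ => Nat.zero_le _) hi
    have h2 : 2^(h+1) ≤ 2^i := Nat.pow_le_pow_right (by norm_num) hih
    have h3 : (2:ℕ)^h < 2^(h+1) := by
      have : (2:ℕ)^(h+1) = 2^h + 2^h := by ring
      have := Nat.one_le_two_pow (n := h)
      omega
    omega
  have hhB : h ∈ B := by
    by_contra hh
    have hsub : B ⊆ range h := by
      intro i hi
      exact mem_range.mpr (lt_of_le_of_ne (hle i hi) (fun hih => hh (hih ▸ hi)))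
    have h1 : ∑ i ∈ B, 2^i ≤ ∑ i ∈ range h, 2^i :=
      Finset.sum_le_sum_of_subset hsub
    rw [hs, sum_range_two_pow] at h1
    have := Nat.one_le_two_pow (n := h)
    omega
  refine Finset.eq_singleton_iff_unique_mem.mpr ⟨hhB, ?_⟩
  intro i hi
  by_contra hne
  have hiB : i ∈ B \ {h} := mem_sdiff.mpr ⟨hi, by simpa using hne⟩
  have h1 : (∑ i ∈ B \ {h}, 2^i) + ∑ i ∈ {h}, 2^i = ∑ i ∈ B, 2^i :=
    Finset.sum_sdiff (by simpa using hhB)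
  have h2 : 2^i ≤ ∑ i ∈ B \ {h}, 2^i := Finset.single_le_sum (fun _ _ => Nat.zero_le _) hiB
  have h3 : 1 ≤ (2:ℕ)^i := Nat.one_le_two_pow
  simp only [Finset.sum_singleton] at h1
  omega

lemma pow_block (e : ℕ → ℂ) (he : IsLejaSeq e) (h : ℕ) :
    (∀ m, m < 2^h → (e m)^(2^h) = 1) ∧ (e (2^h))^(2^h) = -1 := by
  obtain ⟨B, hB, _, hid⟩ := main_inv e he (2^h)
  have hBh : B = {h} := binary_single hB
  subst hBh
  simp only [Finset.prod_singleton] at hid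
  have key : ∀ m, m < 2^h → (e m)^(2^h) = -((e (2^h))^(2^h)) := by
    intro m hm
    have h0 : ∏ m' ∈ range (2^h), ‖e m - e m'‖ = 0 :=
      Finset.prod_eq_zero (mem_range.mpr hm) (by simp)
    rw [hid (e m)] at h0
    have := norm_eq_zero.mp h0
    linear_combination this
  have h0 : (0:ℕ) < 2^h := by positivity
  have he0 := key 0 h0
  rw [he.1, one_pow] at he0
  have hlast : (e (2^h))^(2^h) = -1 := by linear_combination he0
  exact ⟨fun m hm => by rw [key m hm, hlast]; ring, hlast⟩

lemma leja_ne (e : ℕ → ℂ) (he : IsLejaSeq e) {s k : ℕ} (hsk : s < k) : e k ≠ e s := by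
  obtain ⟨B, hB, habs, hid⟩ := main_inv e he k
  intro heq
  have h0 : ∏ m ∈ range k, ‖e k - e m‖ = 0 :=
    Finset.prod_eq_zero (mem_range.mpr hsk) (by rw [heq]; simp)
  rw [hid (e k)] at h0
  have hpos : ∀ i ∈ B, ‖(e k)^(2^i) + (e k)^(2^i)‖ = 2 := by
    intro i _
    rw [← two_mul, norm_mul, norm_pow, habs]
    simp
  rw [Finset.prod_congr rfl hpos, Finset.prod_const] at h0
  have : (0:ℝ) < 2^B.card := by positivity
  linarith

lemma chain_pow (e : ℕ → ℂ) (he : IsLejaSeq e) {j t : ℕ} (hj : 1 ≤ j)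
    (h1 : 2^j ≤ t) (h2 : t + 1 < 2^j + 2^(j-1)) :
    (e (t+1))^(2^(j-1)) = (e t)^(2^(j-1)) := by
  obtain ⟨B, hB, ha, hid⟩ := main_inv e he t
  obtain ⟨v, hvB, hsub, hneg, _, _, _, _⟩ := leja_step e he t B hB ha hid
  have hvlt : v < j - 1 := by
    by_contra hge
    push_neg at hge
    have hr : range (j-1) ⊆ B := fun m hm =>
      hsub (mem_range.mpr (lt_of_lt_of_le (mem_range.mp hm) hge))
    have hex2 : ∃ i0 ∈ B, j ≤ i0 := by
      by_contra hno
      push_neg at hno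
      have hsub2 : B ⊆ range j := fun i hi => mem_range.mpr (hno i hi)
      have hh := Finset.sum_le_sum_of_subset (f := fun i => 2^i) hsub2
      rw [hB, sum_range_two_pow] at hh
      have := Nat.one_le_two_pow (n := j)
      omega
    obtain ⟨i0, hi0B, hi0⟩ := hex2
    have hi0r : i0 ∉ range (j-1) := by
      simp only [mem_range]
      omega
    have hins : insert i0 (range (j-1)) ⊆ B := by
      intro m hm
      rcases mem_insert.mp hm with rfl | hm
      exacts [hi0B, hr hm]
    have hsum := Finset.sum_le_sum_of_subset (f := fun i => 2^i) hins
    rw [Finset.sum_insert hi0r, sum_range_two_pow, hB] at hsum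
    have h2i : 2^j ≤ 2^i0 := Nat.pow_le_pow_right (by norm_num) hi0
    have e1 : 1 ≤ (2:ℕ)^(j-1) := Nat.one_le_two_pow
    have e2 : (2:ℕ)^j = 2^(j-1) * 2 := by rw [← pow_succ, Nat.sub_add_cancel hj]
    omega
  have hvle : v ≤ j-1 := hvlt.le
  have hexp : 2^v * 2^(j-1-v) = 2^(j-1) := by rw [← pow_add, Nat.add_sub_cancel' hvle]
  have heven : Even (2^(j-1-v)) := even_two_pow (Nat.sub_ne_zero_of_lt hvlt)
  calc (e (t+1))^(2^(j-1)) = ((e (t+1))^(2^v))^(2^(j-1-v)) := by rw [← pow_mul, hexp]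
  _ = (-((e t)^(2^v)))^(2^(j-1-v)) := by rw [hneg]
  _ = ((e t)^(2^v))^(2^(j-1-v)) := heven.neg_pow _
  _ = (e t)^(2^(j-1)) := by rw [← pow_mul, hexp]

lemma range_pow_const (e : ℕ → ℂ) (he : IsLejaSeq e) {j k : ℕ} (hj : 1 ≤ j)
    (hk1 : 2^j ≤ k) (hk2 : k < 2^j + 2^(j-1)) :
    (e k)^(2^(j-1)) = (e (2^j))^(2^(j-1)) := by
  induction k, hk1 using Nat.le_induction with
  | base => rfl
  | succ t ht ih =>
    have h2 : t < 2^j + 2^(j-1) := by omega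
    rw [chain_pow e he hj ht hk2, ih h2]

lemma leja_abs_one (e : ℕ → ℂ) (he : IsLejaSeq e) (k : ℕ) : ‖e k‖ = 1 :=
  (main_inv e he k).choose_spec.2.1

theorem re_new_point (e : ℕ → ℂ) (he : IsLejaSeq e) (j k : ℕ) (hj : 1 ≤ j)
    (hk1 : 2 ^ j ≤ k) (hk2 : k < 2 ^ j + 2 ^ (j - 1)) :
    (∀ s, s < k → (e k).re ≠ (e s).re) ∧
    (∀ s, s < k → e k ≠ (starRingEnd ℂ) (e s)) := by
  have hτ : (e k)^(2^(j-1)) = (e (2^j))^(2^(j-1)) := range_pow_const e he hj hk1 hk2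
  set τ := (e (2^j))^(2^(j-1)) with hτdef
  have hsq_aux : ∀ x : ℂ, (x^(2^(j-1)))^2 = x^(2^j) := by
    intro x
    rw [← pow_mul, ← pow_succ, Nat.sub_add_cancel hj]
  have hτsq : τ^2 = -1 := by
    rw [hτdef, hsq_aux]
    exact (pow_block e he j).2
  have hk2j : (e k)^(2^j) = -1 := by
    rw [← hsq_aux, hτ, hτsq]
  have habsk : ‖e k‖ = 1 := leja_abs_one e he k
  have hconj : ∀ s, s < k → e k ≠ (starRingEnd ℂ) (e s) := by
    intro s hsk heq
    by_cases hs : s < 2^j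
    · have h1 : (e s)^(2^j) = 1 := (pow_block e he j).1 s hs
      have h2 : ((starRingEnd ℂ) (e s))^(2^j) = 1 := by rw [← map_pow, h1, map_one]
      rw [← heq, hk2j] at h2
      exact (by norm_num : (-1 : ℂ) ≠ 1) h2
    · push_neg at hs
      have h1 : (e s)^(2^(j-1)) = τ := range_pow_const e he hj hs (by omega)
      have h2 : ((starRingEnd ℂ) (e s))^(2^(j-1)) = (starRingEnd ℂ) τ := by
        rw [← map_pow, h1]
      rw [← heq, hτ] at h2
      have him : τ.im = 0 := Complex.conj_eq_iff_im.mp h2.symm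
      have hre := congrArg Complex.re hτsq
      rw [pow_two] at hre
      simp only [Complex.mul_re, him, Complex.neg_re, Complex.one_re, mul_zero, sub_zero] at hre
      nlinarith [sq_nonneg τ.re]
  refine ⟨?_, hconj⟩
  intro s hsk hre
  have habss : ‖e s‖ = 1 := leja_abs_one e he s
  have hc1 : (e k).re * (e k).re + (e k).im * (e k).im = 1 := by
    have h1 := Complex.sq_norm (e k)
    rw [habsk, Complex.normSq_apply] at h1
    nlinarith
  have hc2 : (e s).re * (e s).re + (e s).im * (e s).im = 1 := by
    have h1 := Complex.sq_norm (e s)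
    rw [habss, Complex.normSq_apply] at h1
    nlinarith
  have him2 : ((e k).im - (e s).im) * ((e k).im + (e s).im) = 0 := by
    rw [hre] at hc1
    nlinarith
  rcases mul_eq_zero.mp him2 with h | h
  · have heq : e k = e s := Complex.ext hre (by linarith)
    exact leja_ne e he hsk heq
  · have heq : e k = (starRingEnd ℂ) (e s) := by
      apply Complex.ext
      · rw [Complex.conj_re]
        exact hre
      · rw [Complex.conj_im]
        linarith
    exact hconj s hsk heq
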